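/- Writing c = c_r + i·c_i with c_r = Re c and c_i = Im c, the following real-part integral identity holds: ∫_{r_i}^{r_o} [ (r/(N² + r²))·|(r G(r))'|² + (k²/r)·|r G(r)|² − (Q'(r)·(U(r) − c_r)/|U(r) − c|²)·|r G(r)|² ] dr = 0, where (r G(r))' = G(r) + r G'(r). -/

import Mathlib

open Real MeasureTheory

lemma rayleigh_re_aux (N k x q u : ℝ) (c : ℂ) (z w : ℂ)
    (hx0 : x ≠ 0) (hx2 : N ^ 2 + x ^ 2 ≠ 0) (hc : c.im ≠ 0) :
    (x / (N ^ 2 + x ^ 2)) * ‖w‖ ^ 2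
      + (k ^ 2 / x) * ‖(x : ℂ) * z‖ ^ 2
      - (q * (u - c.re) / ‖(u : ℂ) - c‖ ^ 2) * ‖(x : ℂ) * z‖ ^ 2
    = (((k : ℂ) ^ 2 * z - ((q : ℝ) : ℂ) / ((u : ℂ) - c) * ((x : ℂ) * z)) * star ((x : ℂ) * z)
        + ((x / (N ^ 2 + x ^ 2) : ℝ) : ℂ) * w * star w).re := by
  have hnc : Complex.normSq ((u : ℂ) - c) ≠ 0 := by
    have : ((u : ℂ) - c) ≠ 0 := by
      intro h
      apply hc
      have := congrArg Complex.im h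
      simpa using this.symm
    simpa [Complex.normSq_eq_zero] using this
  have hk2 : ((k:ℂ))^2 = ((k^2:ℝ):ℂ) := by push_cast; ring
  rw [hk2, Complex.sq_norm, Complex.sq_norm, Complex.sq_norm]
  simp only [Complex.normSq_apply, Complex.mul_re, Complex.mul_im, Complex.add_re,
    Complex.sub_re, Complex.sub_im, Complex.add_im, Complex.ofReal_re, Complex.ofReal_im,
    Complex.div_re, Complex.div_im, ← Complex.ofReal_pow, Complex.mul_re, Complex.mul_im, Complex.star_def,
    Complex.conj_re, Complex.conj_im, Complex.ofReal_pow, Complex.normSq_apply]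
  have hnc' : (u - c.re) * (u - c.re) + (0 - c.im) * (0 - c.im) ≠ 0 := by
    simpa [Complex.normSq_apply] using hnc
  rw [show ((k:ℂ) ^ 2).re = k ^ 2 by rw [hk2]; exact Complex.ofReal_re _]
  field_simp
  ring

theorem stmt_4
    (ri ro : ℝ) (hri : 0 < ri) (hio : ri < ro)
    (N k : ℝ) (hN : 0 ≤ N) (hk : 0 < k)
    (c : ℂ) (hc : c.im ≠ 0)
    (U Q : ℝ → ℝ)
    (hU : ContDiffOn ℝ 2 U (Set.Icc ri ro))
    (hQ : ∀ r, Q r = -(r * deriv U r) / (N ^ 2 + r ^ 2))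
    (G : ℝ → ℂ)
    (hG : ContDiffOn ℝ 2 G (Set.Icc ri ro))
    (hGi : G ri = 0) (hGo : G ro = 0)
    (heq : ∀ r ∈ Set.Icc ri ro,
      deriv (fun s : ℝ => ((s / (N ^ 2 + s ^ 2) : ℝ) : ℂ) *
          deriv (fun t : ℝ => (t : ℂ) * G t) s) r
        - (k : ℂ) ^ 2 * G r
        + ((deriv Q r : ℝ) : ℂ) / ((U r : ℂ) - c) * ((r : ℂ) * G r) = 0) :
    ∫ r in ri..ro,
      (r / (N ^ 2 + r ^ 2)) * ‖deriv (fun t : ℝ => (t : ℂ) * G t) r‖ ^ 2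
        + (k ^ 2 / r) * ‖(r : ℂ) * G r‖ ^ 2
        - (deriv Q r * (U r - c.re) / ‖(U r : ℂ) - c‖ ^ 2)
            * ‖(r : ℂ) * G r‖ ^ 2 = 0 := by
  have hsub : Set.Ioo ri ro ⊆ Set.Icc ri ro := Set.Ioo_subset_Icc_self
  have hud : UniqueDiffOn ℝ (Set.Icc ri ro) := uniqueDiffOn_Icc hio
  have hpos : ∀ x ∈ Set.Icc ri ro, 0 < x := fun x hx => lt_of_lt_of_le hri hx.1
  have hden : ∀ x ∈ Set.Icc ri ro, N ^ 2 + x ^ 2 ≠ 0 := by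
    intro x hx
    have := hpos x hx
    positivity
  set F : ℝ → ℂ := fun t : ℝ => (t : ℂ) * G t with hFdef
  have hF : ContDiffOn ℝ 2 F (Set.Icc ri ro) :=
    (Complex.ofRealCLM.contDiff.contDiffOn).mul hG
  set F1 : ℝ → ℂ := derivWithin F (Set.Icc ri ro) with hF1def
  have hF1c : ContinuousOn F1 (Set.Icc ri ro) :=
    hF.continuousOn_derivWithin hud (by norm_num)
  have hF1d : ContDiffOn ℝ 1 F1 (Set.Icc ri ro) := hF.derivWithin hud (by norm_num)
  have hmemN : ∀ x ∈ Set.Ioo ri ro, Set.Icc ri ro ∈ nhds x := fun x hx =>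
    Icc_mem_nhds hx.1 hx.2
  have hderivF : ∀ x ∈ Set.Ioo ri ro, deriv F x = F1 x := fun x hx =>
    (derivWithin_of_mem_nhds (hmemN x hx)).symm
  have hFd : ∀ x ∈ Set.Ioo ri ro, HasDerivAt F (F1 x) x := by
    intro x hx
    have hdx : DifferentiableAt ℝ F x :=
      ((hF.differentiableOn (by norm_num)) x (hsub hx)).differentiableAt (hmemN x hx)
    have := hdx.hasDerivAt
    rwa [hderivF x hx] at this
  -- the coefficient function
  have haC : ContinuousOn (fun s : ℝ => ((s / (N ^ 2 + s ^ 2) : ℝ) : ℂ)) (Set.Icc ri ro) := by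
    apply Complex.continuous_ofReal.comp_continuousOn
    exact ContinuousOn.div continuousOn_id (by fun_prop) hden
  have haD : ∀ x ∈ Set.Ioo ri ro,
      DifferentiableAt ℝ (fun s : ℝ => ((s / (N ^ 2 + s ^ 2) : ℝ) : ℂ)) x := by
    intro x hx
    have h1 : DifferentiableAt ℝ (fun s : ℝ => s / (N ^ 2 + s ^ 2)) x :=
      differentiableAt_id.div (by fun_prop) (hden x (hsub hx))
    exact Complex.ofRealCLM.differentiable.differentiableAt.comp x h1
  set A : ℝ → ℂ := fun s : ℝ => ((s / (N ^ 2 + s ^ 2) : ℝ) : ℂ) * deriv F s with hAdef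
  -- differentiability of A on the interior via the nice version
  have hAd : ∀ x ∈ Set.Ioo ri ro, DifferentiableAt ℝ A x := by
    intro x hx
    have ht : DifferentiableAt ℝ (fun s : ℝ => ((s / (N ^ 2 + s ^ 2) : ℝ) : ℂ) * F1 s) x :=
      (haD x hx).mul
        (((hF1d.differentiableOn (by norm_num)) x (hsub hx)).differentiableAt (hmemN x hx))
    apply ht.congr_of_eventuallyEq
    filter_upwards [Ioo_mem_nhds hx.1 hx.2] with s hs
    rw [hAdef]
    simp only
    rw [hderivF s hs]
  -- rewrite the derivative of A using the Rayleigh equation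
  have hAder : ∀ x ∈ Set.Ioo ri ro,
      HasDerivAt A ((k : ℂ) ^ 2 * G x
        - ((deriv Q x : ℝ) : ℂ) / ((U x : ℂ) - c) * ((x : ℂ) * G x)) x := by
    intro x hx
    have h1 := (hAd x hx).hasDerivAt
    have h2 := heq x (hsub hx)
    have h3 : deriv A x = (k : ℂ) ^ 2 * G x
        - ((deriv Q x : ℝ) : ℂ) / ((U x : ℂ) - c) * ((x : ℂ) * G x) := by
      linear_combination h2
    rwa [h3] at h1
  -- the function H and its derivative h
  set h : ℝ → ℂ := fun r =>
    ((k : ℂ) ^ 2 * G r - ((deriv Q r : ℝ) : ℂ) / ((U r : ℂ) - c) * ((r : ℂ) * G r))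
        * star ((r : ℂ) * G r)
      + ((r / (N ^ 2 + r ^ 2) : ℝ) : ℂ) * F1 r * star (F1 r) with hhdef
  set H : ℝ → ℂ := fun r => A r * star (F r) with hHdef
  have hasH : ∀ x ∈ Set.Ioo ri ro, HasDerivAt H (h x) x := by
    intro x hx
    have hstar : HasDerivAt (fun s => star (F s)) (star (F1 x)) x := (hFd x hx).star
    have := (hAder x hx).mul hstar
    have hval : h x = ((k : ℂ) ^ 2 * G x
        - ((deriv Q x : ℝ) : ℂ) / ((U x : ℂ) - c) * ((x : ℂ) * G x)) * star (F x)
        + A x * star (F1 x) := by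
      rw [hhdef, hAdef]
      simp only
      rw [hderivF x hx]
    rw [hval]
    exact this
  -- continuity of H on the closed interval
  have hFri : F ri = 0 := by rw [hFdef]; simp [hGi]
  have hFro : F ro = 0 := by rw [hFdef]; simp [hGo]
  have hHc : ContinuousOn H (Set.Icc ri ro) := by
    have hHt : ContinuousOn
        (fun r => ((r / (N ^ 2 + r ^ 2) : ℝ) : ℂ) * F1 r * star (F r)) (Set.Icc ri ro) :=
      (haC.mul hF1c).mul (hF.continuousOn.star)
    apply hHt.congr
    intro x hx
    rcases hx.1.lt_or_eq with h1 | h1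
    · rcases hx.2.lt_or_eq with h2 | h2
      · have hxo : x ∈ Set.Ioo ri ro := ⟨h1, h2⟩
        rw [hHdef, hAdef]
        simp only
        rw [hderivF x hxo]
      · rw [hHdef]
        simp only [h2, hFro]
        simp
    · rw [hHdef]
      simp only [← h1, hFri]
      simp
  -- the continuous comparison function for integrability
  set U1 : ℝ → ℝ := derivWithin U (Set.Icc ri ro) with hU1def
  have hU1 : ContDiffOn ℝ 1 U1 (Set.Icc ri ro) := hU.derivWithin hud (by norm_num)
  set Qt : ℝ → ℝ := fun r => -(r * U1 r) / (N ^ 2 + r ^ 2) with hQtdef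
  have hQt : ContDiffOn ℝ 1 Qt (Set.Icc ri ro) :=
    ContDiffOn.div ((contDiffOn_id.mul hU1).neg) (by fun_prop) hden
  set Q1 : ℝ → ℝ := derivWithin Qt (Set.Icc ri ro) with hQ1def
  have hQ1c : ContinuousOn Q1 (Set.Icc ri ro) := hQt.continuousOn_derivWithin hud le_rfl
  have hQQ : ∀ x ∈ Set.Ioo ri ro, deriv Q x = Q1 x := by
    intro x hx
    have hQeq : Q =ᶠ[nhds x] Qt := by
      filter_upwards [Ioo_mem_nhds hx.1 hx.2] with s hs
      rw [hQ s, hQtdef]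
      simp only
      have hds : U1 s = deriv U s := by
        rw [hU1def]; exact derivWithin_of_mem_nhds (hmemN s hs)
      rw [hds]
    rw [hQeq.deriv_eq, hQ1def, derivWithin_of_mem_nhds (hmemN x hx)]
  have hUc : ∀ x : ℝ, ((U x : ℂ) - c) ≠ 0 := by
    intro x h
    apply hc
    have := congrArg Complex.im h
    simpa using this.symm
  set g : ℝ → ℂ := fun r =>
    ((k : ℂ) ^ 2 * G r - ((Q1 r : ℝ) : ℂ) / ((U r : ℂ) - c) * ((r : ℂ) * G r))
        * star ((r : ℂ) * G r)
      + ((r / (N ^ 2 + r ^ 2) : ℝ) : ℂ) * F1 r * star (F1 r) with hgdef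
  have hgC : ContinuousOn g (Set.Icc ri ro) := by
    apply ContinuousOn.add
    · apply ContinuousOn.mul
      · apply ContinuousOn.sub
        · exact continuousOn_const.mul hG.continuousOn
        · apply ContinuousOn.mul
          · apply ContinuousOn.div
            · exact Complex.continuous_ofReal.comp_continuousOn hQ1c
            · exact (Complex.continuous_ofReal.comp_continuousOn hU.continuousOn).sub
                continuousOn_const
            · exact fun x _ => hUc x
          · exact (Complex.continuous_ofReal.comp_continuousOn continuousOn_id).mul
              hG.continuousOn
      · exact ((Complex.continuous_ofReal.comp_continuousOn continuousOn_id).mul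
          hG.continuousOn).star
    · exact (haC.mul hF1c).mul hF1c.star
  have hgh : Set.EqOn g h (Set.Ioo ri ro) := by
    intro x hx
    rw [hgdef, hhdef]
    simp only
    rw [hQQ x hx]
  have hInt : IntervalIntegrable h volume ri ro := by
    rw [intervalIntegrable_iff_integrableOn_Ioo_of_le hio.le]
    have hgInt : IntegrableOn g (Set.Ioo ri ro) := by
      have hgC' : ContinuousOn g (Set.uIcc ri ro) := by
        rw [Set.uIcc_of_le hio.le]; exact hgC
      exact (intervalIntegrable_iff_integrableOn_Ioo_of_le hio.le).1 hgC'.intervalIntegrable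
    exact hgInt.congr_fun hgh measurableSet_Ioo
  -- FTC
  have hFTC : (∫ r in ri..ro, h r) = H ro - H ri :=
    intervalIntegral.integral_eq_sub_of_hasDeriv_right_of_le hio.le hHc
      (fun x hx => (hasH x hx).hasDerivWithinAt) hInt
  have hint0 : (∫ r in ri..ro, h r) = 0 := by
    rw [hFTC, hHdef]
    simp only [hFri, hFro]
    simp
  -- pass to real parts
  have hre : (∫ r in ri..ro, (h r).re) = 0 := by
    have := Complex.reCLM.intervalIntegral_comp_comm hInt
    simp only [Complex.reCLM_apply] at this
    rw [this, hint0]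
    simp
  rw [← hre]
  apply intervalIntegral.integral_congr_ae
  have hne : ∀ᵐ x : ℝ, x ≠ ro := by
    have h1 : (volume ({ro} : Set ℝ)) = 0 := measure_singleton ro
    rw [Filter.eventually_iff, mem_ae_iff]
    convert h1 using 2
    ext x
    simp
  filter_upwards [hne] with x hx hmem
  rw [Set.uIoc_of_le hio.le] at hmem
  have hxo : x ∈ Set.Ioo ri ro := ⟨hmem.1, lt_of_le_of_ne hmem.2 hx⟩
  rw [hderivF x hxo, hhdef]
  simp only
  exact rayleigh_re_aux N k x (deriv Q x) (U x) c (G x) (F1 x)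
    (ne_of_gt (hpos x (hsub hxo))) (hden x (hsub hxo)) hc
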